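/- Let R be a commutative ring in which 2 is invertible and let θ be a ring automorphism of R with θ(θ(x)) = x for all x. Let 𝔪 be a maximal ideal of R and set I = 𝔪 ∩ θ(𝔪). Then the natural map 𝒜(R) → 𝒜(R/I) is surjective; explicitly, for all x₁, x₂ ∈ R with x₁·θ(x₁) − x₂ − θ(x₂) ∈ I, there exist y₁, y₂ ∈ R such that y₁·θ(y₁) = y₂ + θ(y₂), y₁ − x₁ ∈ I, and y₂ − x₂ ∈ I. -/
import Mathlib


/-- Over a commutative ring `R` with `2` invertible and an involutive ring automorphism `θ`,
for a maximal ideal `𝔪` and `I = 𝔪 ∩ θ(𝔪)`, the natural map `𝒜(R) → 𝒜(R/I)` is surjective. -/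
theorem stmt_2 {R : Type*} [CommRing R] (h2 : IsUnit (2 : R))
    (θ : R ≃+* R) (hθ : ∀ x, θ (θ x) = x)
    (𝔪 : Ideal R) (hm : 𝔪.IsMaximal)
    (x₁ x₂ : R)
    (hx : x₁ * θ x₁ - x₂ - θ x₂ ∈ 𝔪 ⊓ Ideal.map (θ : R →+* R) 𝔪) :
    ∃ y₁ y₂ : R, y₁ * θ y₁ = y₂ + θ y₂ ∧
      y₁ - x₁ ∈ 𝔪 ⊓ Ideal.map (θ : R →+* R) 𝔪 ∧
      y₂ - x₂ ∈ 𝔪 ⊓ Ideal.map (θ : R →+* R) 𝔪 := by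
  obtain ⟨c, hc⟩ := h2.exists_right_inv
  set d : R := x₁ * θ x₁ - x₂ - θ x₂ with hd
  have hθd : θ d = d := by
    simp only [hd, map_sub, map_mul, hθ]
    ring
  have hθc : θ c = c := by
    have h1 : (2 : R) * θ c = 1 := by
      have := congrArg θ hc
      simpa [map_ofNat] using this
    calc θ c = (2 * c) * θ c := by rw [hc, one_mul]
    _ = c * (2 * θ c) := by ring
    _ = c := by rw [h1, mul_one]
  refine ⟨x₁, x₂ + c * d, ?_, ?_, ?_⟩
  · have : θ (x₂ + c * d) = θ x₂ + c * d := by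
      rw [map_add, map_mul, hθc, hθd]
    rw [this, hd]
    have : (2 : R) * (c * d) = d := by
      rw [← mul_assoc, hc, one_mul]
    linear_combination -this
  · simp only [sub_self]; exact (𝔪 ⊓ Ideal.map (θ : R →+* R) 𝔪).zero_mem
  · have : x₂ + c * d - x₂ = c * d := by ring
    rw [this]
    exact Ideal.mul_mem_left _ c hx
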